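/- arXiv:2203.14289 — 3 statements merged into one kernel-verified Lean document; each statement's English description precedes it below -/
import Mathlib

section
/- Existence of decomposition into indecomposables: Let P be any poset and let M be a pointwise finite-dimensional P-module. Then there exists a family (M^λ)_{λ ∈ Λ} of indecomposable P-modules such that M ≅ ⊕_{λ ∈ Λ} M^λ. -/
set_option autoImplicit false

open Classical

/-- A persistence module over a poset `P`, with coefficients in a field `k`:
a functor from `P` (viewed as a category) to the category of `k`-vector spaces. -/
structure PersMod (k : Type) [Field k] (P : Type) [Preorder P] : Type 1 where
  V : P → Type
  [acg : ∀ x, AddCommGroup (V x)]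
  [mod : ∀ x, Module k (V x)]
  map : ∀ {x y : P}, x ≤ y → V x →ₗ[k] V y
  map_id : ∀ (x : P) (v : V x), map (le_refl x) v = v
  map_comp : ∀ {x y z : P} (h₁ : x ≤ y) (h₂ : y ≤ z) (v : V x),
    map h₂ (map h₁ v) = map (le_trans h₁ h₂) v

attribute [instance] PersMod.acg PersMod.mod

section Core

variable {k : Type} [Field k] {P : Type} [Preorder P]

/-- Order-convexity of a subset of a poset. -/
def IsConvexSet (I : Set P) : Prop :=
  ∀ ⦃s u t : P⦄, s ∈ I → t ∈ I → s ≤ u → u ≤ t → u ∈ I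

/-- Any two points of `I` are joined by a zigzag of comparable elements of `I`. -/
def ZigzagConnected (I : Set P) : Prop :=
  ∀ s ∈ I, ∀ t ∈ I, ∃ (m : ℕ) (u : ℕ → P), u 0 = s ∧ u m = t ∧
    (∀ i ≤ m, u i ∈ I) ∧ ∀ i < m, u i ≤ u (i + 1) ∨ u (i + 1) ≤ u i

/-- An interval in a poset: a nonempty, order-convex, zigzag-connected subset. -/
def IsPersInterval (I : Set P) : Prop :=
  I.Nonempty ∧ IsConvexSet I ∧ ZigzagConnected I

theorem isConvexSet_empty : IsConvexSet (∅ : Set P) :=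
  fun _ _ _ hs _ _ _ => absurd hs (Set.notMem_empty _)

theorem isConvexSet_Ici (z : P) : IsConvexSet (Set.Ici z) :=
  fun _ _ _ hs _ hsu _ => le_trans hs hsu

/-- The value of the interval module `k_I` at `x`: a copy of `k` if `x ∈ I`, and `0` otherwise,
realized as a submodule of `k`. -/
def intervalSpace (k : Type) [Field k] {P : Type} [Preorder P] (I : Set P) (x : P) :
    Submodule k k where
  carrier := {v | x ∈ I ∨ v = 0}
  add_mem' := by
    rintro a b (ha | ha) (hb | hb)
    · exact Or.inl ha
    · exact Or.inl ha
    · exact Or.inl hb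
    · exact Or.inr (by rw [ha, hb, add_zero])
  zero_mem' := Or.inr rfl
  smul_mem' := by
    rintro c a (ha | ha)
    · exact Or.inl ha
    · exact Or.inr (by rw [ha, smul_zero])

theorem mem_intervalSpace {I : Set P} {x : P} {v : k} :
    v ∈ intervalSpace k I x ↔ x ∈ I ∨ v = 0 := Iff.rfl

/-- The interval module `k_I` of an order-convex set `I`: a copy of `k` at points of `I` and `0`
elsewhere, with identity internal maps within `I` and zero maps otherwise. -/
noncomputable def intervalModule (k : Type) [Field k] {P : Type} [Preorder P]
    (I : Set P) (hI : IsConvexSet I) : PersMod k P where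
  V x := ↥(intervalSpace k I x)
  acg := fun _ => inferInstance
  mod := fun _ => inferInstance
  map {x y} _ :=
    { toFun := fun v => ⟨if y ∈ I then (v : k) else 0, by
        by_cases hy : y ∈ I
        · exact Or.inl hy
        · exact Or.inr (if_neg hy)⟩
      map_add' := by
        intro a b
        apply Subtype.ext
        by_cases hy : y ∈ I <;> simp [hy]
      map_smul' := by
        intro c a
        apply Subtype.ext
        by_cases hy : y ∈ I <;> simp [hy] }
  map_id := by
    intro x v
    apply Subtype.ext
    by_cases hx : x ∈ I
    · simp [hx]
    · rcases v.property with h | h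
      · exact absurd h hx
      · simp [hx, h]
  map_comp := by
    intro x y z h₁ h₂ v
    apply Subtype.ext
    by_cases hz : z ∈ I
    · by_cases hy : y ∈ I
      · simp [hz, hy]
      · have hx : x ∉ I := fun hx => hy (hI hx hz h₁ h₂)
        rcases v.property with h | h
        · exact absurd h hx
        · simp [hz, hy, h]
    · simp [hz]

/-- Pointwise direct sum of a family of persistence modules. -/
noncomputable def dSum {Λ : Type} (Mf : Λ → PersMod k P) : PersMod k P where
  V x := Π₀ l, (Mf l).V x
  acg := fun _ => inferInstance
  mod := fun _ => inferInstance
  map h := DFinsupp.mapRange.linearMap fun l => (Mf l).map h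
  map_id := by
    intro x v
    ext l
    simp [DFinsupp.mapRange.linearMap_apply, (Mf l).map_id]
  map_comp := by
    intro x y z h₁ h₂ v
    ext l
    simp [DFinsupp.mapRange.linearMap_apply, (Mf l).map_comp]

/-- Pointwise direct sum of two persistence modules. -/
def prodMod (M N : PersMod k P) : PersMod k P where
  V x := M.V x × N.V x
  acg := fun _ => inferInstance
  mod := fun _ => inferInstance
  map h := (M.map h).prodMap (N.map h)
  map_id := by
    intro x v
    cases v with
    | mk a b => simp [M.map_id, N.map_id]
  map_comp := by
    intro x y z h₁ h₂ v
    cases v with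
    | mk a b => simp [M.map_comp, N.map_comp]

/-- Isomorphism of persistence modules: a family of linear isomorphisms commuting with the
structure maps. -/
def PersIso (M N : PersMod k P) : Prop :=
  ∃ e : ∀ x, M.V x ≃ₗ[k] N.V x,
    ∀ (x y : P) (h : x ≤ y) (v : M.V x), e y (M.map h v) = N.map h (e x v)

/-- The zero persistence module (realized as the interval module of the empty set). -/
noncomputable def zeroPM (k : Type) [Field k] (P : Type) [Preorder P] : PersMod k P :=
  intervalModule k (∅ : Set P) isConvexSet_empty

def IsZeroMod (M : PersMod k P) : Prop := ∀ (x : P) (v : M.V x), v = 0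

/-- A persistence module is indecomposable if it is nonzero and any direct sum decomposition
has a zero summand. -/
def Indecomposable (M : PersMod k P) : Prop :=
  ¬ IsZeroMod M ∧
    ∀ M' M'' : PersMod k P, PersIso M (prodMod M' M'') → IsZeroMod M' ∨ IsZeroMod M''

/-- Pointwise finite-dimensionality. -/
def PFD (M : PersMod k P) : Prop := ∀ x, Module.Finite k (M.V x)

theorem isPersInterval_Ici (z : P) : IsPersInterval (Set.Ici z) := by
  refine ⟨⟨z, le_refl z⟩, isConvexSet_Ici z, ?_⟩
  intro s hs t ht
  refine ⟨2, fun i => if i = 0 then s else if i = 1 then z else t, by simp, by simp, ?_, ?_⟩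
  · intro i hi
    interval_cases i <;> simp [hs, ht, Set.mem_Ici]
  · intro i hi
    interval_cases i
    · exact Or.inr hs
    · exact Or.inl ht

end Core
section Decomposition

variable {k : Type} [Field k] {P : Type} [PartialOrder P] {M : PersMod k P}

/-- A submodule of a persistence module: a pointwise submodule closed under the
structure maps. -/
structure Submod (M : PersMod k P) : Type where
  S : ∀ x, Submodule k (M.V x)
  map_mem : ∀ {x y : P} (h : x ≤ y) {v : M.V x}, v ∈ S x → M.map h v ∈ S y

theorem Submod.ext' {N₁ N₂ : Submod M} (h : ∀ x, N₁.S x = N₂.S x) : N₁ = N₂ := by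
  cases N₁; cases N₂
  simp only [Submod.mk.injEq]
  exact funext h

instance : PartialOrder (Submod M) where
  le N₁ N₂ := ∀ x, N₁.S x ≤ N₂.S x
  le_refl N x := le_rfl
  le_trans N₁ N₂ N₃ h₁ h₂ x := (h₁ x).trans (h₂ x)
  le_antisymm N₁ N₂ h₁ h₂ := Submod.ext' fun x => le_antisymm (h₁ x) (h₂ x)

/-- The zero submodule. -/
def botSubmod (M : PersMod k P) : Submod M where
  S _ := ⊥
  map_mem := by
    intro x y h v hv
    simp only [Submodule.mem_bot] at hv ⊢
    rw [hv, map_zero]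

/-- The full submodule. -/
def topSubmod (M : PersMod k P) : Submod M where
  S _ := ⊤
  map_mem := by intro x y h v _; trivial

/-- A decomposition of a persistence module: a set of nonzero submodules that is
pointwise independent and pointwise spans. -/
structure Decomp (M : PersMod k P) : Type where
  parts : Set (Submod M)
  nonzero : ∀ N ∈ parts, ∃ x, N.S x ≠ ⊥
  disj : ∀ (x : P), ∀ N ∈ parts, Disjoint (N.S x) (⨆ J ∈ parts \ {N}, J.S x)
  spans : ∀ x, (⨆ J ∈ parts, J.S x) = ⊤

theorem iSup_ne_eq_sSup_diff {α β : Type} [CompleteLattice α] (s : Set β) (f : β → α)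
    (i : s) : (⨆ (j : s), ⨆ (_ : j ≠ i), f j.1) = ⨆ j ∈ s \ {i.1}, f j := by
  apply le_antisymm
  · refine iSup₂_le fun j hj => ?_
    refine le_iSup₂ (f := fun b (_ : b ∈ s \ {i.1}) => f b) j.1 ⟨j.2, ?_⟩
    exact fun hji => hj (Subtype.ext hji)
  · refine iSup₂_le fun j hj => ?_
    exact le_iSup₂ (f := fun (b : s) (_ : b ≠ i) => f b.1) (⟨j, hj.1⟩ : s)
      (fun hji => hj.2 (by rw [show j = (i : β) from congrArg Subtype.val hji]; rfl))

theorem Decomp.indep (D : Decomp M) (x : P) :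
    iSupIndep (fun N : D.parts => N.1.S x) := by
  intro i
  have := iSup_ne_eq_sSup_diff D.parts (fun N => N.S x) i
  rw [show (⨆ j, ⨆ (_ : j ≠ i), (fun N : D.parts => N.1.S x) j)
      = ⨆ (j : D.parts), ⨆ (_ : j ≠ i), (fun N => N.S x) j.1 from rfl, this]
  exact D.disj x i.1 i.2

/-- Uniqueness of the member of a decomposition containing a given nonzero subspace. -/
theorem Decomp.uniq (D : Decomp M) {x : P} {W : Submodule k (M.V x)} (hW : W ≠ ⊥)
    {N₁ N₂ : Submod M} (h₁ : N₁ ∈ D.parts) (h₂ : N₂ ∈ D.parts)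
    (le₁ : W ≤ N₁.S x) (le₂ : W ≤ N₂.S x) : N₁ = N₂ := by
  by_contra hne
  refine hW (le_bot_iff.mp ?_)
  refine (D.disj x N₁ h₁) le₁ (le₂.trans ?_)
  exact le_iSup₂ (f := fun J (_ : J ∈ D.parts \ {N₁}) => J.S x) N₂ ⟨h₂, fun h => hne (h.symm)⟩

/-- Refinement order: `D ≤ E` if every part of `E` is contained in a part of `D`. -/
instance : Preorder (Decomp M) where
  le D E := ∀ K ∈ E.parts, ∃ N ∈ D.parts, K ≤ N
  le_refl D K hK := ⟨K, hK, le_rfl⟩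
  le_trans D E F h₁ h₂ K hK := by
    obtain ⟨N, hN, hle⟩ := h₂ K hK
    obtain ⟨N', hN', hle'⟩ := h₁ N hN
    exact ⟨N', hN', hle.trans hle'⟩

theorem Decomp.le_def {D E : Decomp M} : D ≤ E ↔ ∀ K ∈ E.parts, ∃ N ∈ D.parts, K ≤ N :=
  Iff.rfl

theorem Decomp.parts_eq_of_le_of_le {D E : Decomp M} (h₁ : D ≤ E) (h₂ : E ≤ D) :
    D.parts = E.parts := by
  have key : ∀ (A B : Decomp M), A ≤ B → B ≤ A → A.parts ⊆ B.parts := by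
    intro A B hAB hBA N hN
    obtain ⟨K, hK, hleK⟩ := hBA N hN
    obtain ⟨N', hN', hleN'⟩ := hAB K hK
    obtain ⟨x, hx⟩ := A.nonzero N hN
    have hNN' : N = N' := A.uniq hx hN hN' le_rfl ((hleK.trans hleN') x)
    have hKN : K = N := le_antisymm (hleN'.trans (le_of_eq hNN'.symm)) hleK
    rwa [← hKN]
  exact Set.Subset.antisymm (key D E h₁ h₂) (key E D h₂ h₁)

end Decomposition
section Chain

variable {k : Type} [Field k] {P : Type} [PartialOrder P] {M : PersMod k P}

/-- Choice of a part of `D` containing a given submodule, when one exists. -/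
noncomputable def contPart (D : Decomp M) (K : Submod M) : Submod M :=
  if h : ∃ N ∈ D.parts, K ≤ N then h.choose else botSubmod M

theorem contPart_spec {D : Decomp M} {K : Submod M} (h : ∃ N ∈ D.parts, K ≤ N) :
    contPart D K ∈ D.parts ∧ K ≤ contPart D K := by
  rw [contPart, dif_pos h]
  exact ⟨h.choose_spec.1, h.choose_spec.2⟩

/-- Choice of the part of `E` whose value at `x` contains `W`, when one exists. -/
noncomputable def pickP (E : Decomp M) (x : P) (W : Submodule k (M.V x)) : Submod M :=
  if h : ∃ N ∈ E.parts, W ≤ N.S x then h.choose else botSubmod M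

theorem pickP_spec {E : Decomp M} {x : P} {W : Submodule k (M.V x)}
    (h : ∃ N ∈ E.parts, W ≤ N.S x) : pickP E x W ∈ E.parts ∧ W ≤ (pickP E x W).S x := by
  rw [pickP, dif_pos h]
  exact ⟨h.choose_spec.1, h.choose_spec.2⟩

theorem pickP_unique {E : Decomp M} {x : P} {W : Submodule k (M.V x)} (hW : W ≠ ⊥)
    {N : Submod M} (hN : N ∈ E.parts) (hle : W ≤ N.S x) : pickP E x W = N := by
  have h : ∃ N ∈ E.parts, W ≤ N.S x := ⟨N, hN, hle⟩
  obtain ⟨h1, h2⟩ := pickP_spec h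
  exact E.uniq hW h1 hN h2 hle

/-- Regrouping: a part of a coarser decomposition is the supremum of the parts of a finer
decomposition lying inside it. -/
theorem regroup {D E : Decomp M} (hDE : D ≤ E) (y : P) {N₀ : Submod M}
    (h₀ : N₀ ∈ D.parts) :
    N₀.S y = ⨆ (K : E.parts), ⨆ (_ : contPart D K.1 = N₀), K.1.S y := by
  set A := ⨆ (K : E.parts), ⨆ (_ : contPart D K.1 = N₀), K.1.S y with hA
  set B := ⨆ (K : E.parts), ⨆ (_ : contPart D K.1 ≠ N₀), K.1.S y with hB
  have hcont : ∀ K : E.parts, contPart D K.1 ∈ D.parts ∧ K.1 ≤ contPart D K.1 :=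
    fun K => contPart_spec (hDE K.1 K.2)
  have hAB : A ⊔ B = ⊤ := by
    rw [hA, hB, ← iSup_sup_eq]
    have : ∀ K : E.parts,
        ((⨆ (_ : contPart D K.1 = N₀), K.1.S y) ⊔ ⨆ (_ : contPart D K.1 ≠ N₀), K.1.S y)
          = K.1.S y := by
      intro K
      by_cases h : contPart D K.1 = N₀
      · rw [iSup_pos h, iSup_neg (fun hn => hn h), sup_bot_eq]
      · rw [iSup_pos h, iSup_neg h, bot_sup_eq]
    rw [iSup_congr this, ← E.spans y, iSup_subtype]
  have hAle : A ≤ N₀.S y := by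
    refine iSup₂_le fun K hK => ?_
    have := (hcont K).2 y
    rwa [hK] at this
  have hBle : B ≤ ⨆ J ∈ D.parts \ {N₀}, J.S y := by
    refine iSup₂_le fun K hK => ?_
    refine ((hcont K).2 y).trans ?_
    exact le_iSup₂ (f := fun J (_ : J ∈ D.parts \ {N₀}) => J.S y) (contPart D K.1)
      ⟨(hcont K).1, hK⟩
  have hdisj := D.disj y N₀ h₀
  have : N₀.S y = (A ⊔ B) ⊓ N₀.S y := by rw [hAB, top_inf_eq]
  rw [this, sup_inf_assoc_of_le _ hAle]
  have : B ⊓ N₀.S y = ⊥ := le_bot_iff.mp ((hdisj.symm.mono_left hBle) inf_le_left inf_le_right)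
  rw [this, sup_bot_eq]

end Chain
section Stable

variable {k : Type} [Field k] {P : Type} [PartialOrder P] {M : PersMod k P}

/-- The key property of a member of a chain that maximizes the number of parts nonzero at `y`:
beyond it, the nonzero parts at `y` are stable. -/
def StableAt (C : Set (Decomp M)) (y : P) (D₀ : Decomp M) : Prop :=
  ∀ E ∈ C, D₀ ≤ E →
    (∀ N₀ ∈ D₀.parts, N₀.S y ≠ ⊥ → ∃ K ∈ E.parts, K ≤ N₀ ∧ K.S y = N₀.S y) ∧
    (∀ K ∈ E.parts, K.S y ≠ ⊥ → ∃ N₀ ∈ D₀.parts, N₀.S y ≠ ⊥ ∧ K.S y = N₀.S y)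

theorem exists_stable (hM : PFD M) {C : Set (Decomp M)} (hne : C.Nonempty) (y : P) :
    ∃ D₀ ∈ C, StableAt C y D₀ := by
  haveI : Module.Finite k (M.V y) := hM y
  classical
  -- the number of parts of a decomposition that are nonzero at `y`
  have hcard : ∀ D : Decomp M, Nat.card {N : D.parts // N.1.S y ≠ ⊥}
      ≤ Module.finrank k (M.V y) := by
    intro D
    haveI : Fintype {N : D.parts // N.1.S y ≠ ⊥} :=
      (D.indep y).fintypeNeBotOfFiniteDimensional
    rw [Nat.card_eq_fintype_card]
    exact (D.indep y).subtype_ne_bot_le_finrank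
  set n : Decomp M → ℕ := fun D => Nat.card {N : D.parts // N.1.S y ≠ ⊥} with hn
  have hbdd : BddAbove (n '' C) := ⟨Module.finrank k (M.V y), by
    rintro m ⟨D, _, rfl⟩; exact hcard D⟩
  have hmem : sSup (n '' C) ∈ n '' C := Nat.sSup_mem (hne.image n) hbdd
  obtain ⟨D₀, hD₀C, hD₀⟩ := hmem
  refine ⟨D₀, hD₀C, ?_⟩
  intro E hEC hDE
  haveI FE : Fintype {N : E.parts // N.1.S y ≠ ⊥} :=
    (E.indep y).fintypeNeBotOfFiniteDimensional
  haveI FD : Fintype {N : D₀.parts // N.1.S y ≠ ⊥} :=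
    (D₀.indep y).fintypeNeBotOfFiniteDimensional
  have hcont : ∀ K : E.parts, contPart D₀ K.1 ∈ D₀.parts ∧ K.1 ≤ contPart D₀ K.1 :=
    fun K => contPart_spec (hDE K.1 K.2)
  set ψ : {N : E.parts // N.1.S y ≠ ⊥} → {N : D₀.parts // N.1.S y ≠ ⊥} :=
    fun K => ⟨⟨contPart D₀ K.1.1, (hcont K.1).1⟩,
      fun hb => K.2 (le_bot_iff.mp (((hcont K.1).2 y).trans (le_of_eq hb)))⟩ with hψ
  -- surjectivity of ψ
  have hsurj : Function.Surjective ψ := by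
    rintro ⟨⟨N₀, h₀⟩, hy0⟩
    have hre := regroup hDE y h₀
    by_contra hno
    push_neg at hno
    refine hy0 ?_
    rw [hre]
    refine iSup_eq_bot.mpr fun K => iSup_eq_bot.mpr fun hK => ?_
    by_contra hKb
    exact absurd (Subtype.ext (Subtype.ext (show (ψ ⟨K, hKb⟩).1.1 = N₀ from hK)))
      (hno ⟨K, hKb⟩)
  have hinj : Function.Injective ψ := by
    have h1 : Fintype.card {N : D₀.parts // N.1.S y ≠ ⊥}
        ≤ Fintype.card {N : E.parts // N.1.S y ≠ ⊥} := Fintype.card_le_of_surjective ψ hsurj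
    have h2 : Fintype.card {N : E.parts // N.1.S y ≠ ⊥}
        ≤ Fintype.card {N : D₀.parts // N.1.S y ≠ ⊥} := by
      have e1 : n E ≤ sSup (n '' C) := le_csSup hbdd ⟨E, hEC, rfl⟩
      rw [← hD₀] at e1
      simpa only [hn, Nat.card_eq_fintype_card] using e1
    exact ((Fintype.bijective_iff_surjective_and_card ψ).mpr
      ⟨hsurj, le_antisymm h2 h1⟩).1
  -- key: a part of E nonzero at y has the same value at y as its container
  have key : ∀ K : E.parts, K.1.S y ≠ ⊥ → K.1.S y = (contPart D₀ K.1).S y := by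
    intro K hKy
    refine le_antisymm ((hcont K).2 y) ?_
    rw [regroup hDE y (hcont K).1]
    refine iSup₂_le fun K' hK' => ?_
    by_cases hK'y : K'.1.S y = ⊥
    · rw [hK'y]; exact bot_le
    · have : (⟨K', hK'y⟩ : {N : E.parts // N.1.S y ≠ ⊥}) = ⟨K, hKy⟩ :=
        hinj (Subtype.ext (Subtype.ext hK'))
      rw [show K' = K from congrArg Subtype.val this]
  constructor
  · intro N₀ h₀ hy0
    obtain ⟨⟨K, hKy⟩, hψK⟩ := hsurj ⟨⟨N₀, h₀⟩, hy0⟩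
    have hc : contPart D₀ K.1 = N₀ := congrArg (Subtype.val ∘ Subtype.val) hψK
    refine ⟨K.1, K.2, ?_, ?_⟩
    · rw [← hc]; exact (hcont K).2
    · rw [key K hKy, hc]
  · intro K hK hKy
    refine ⟨contPart D₀ K, (contPart_spec (hDE K hK)).1, ?_, key ⟨K, hK⟩ hKy⟩
    rw [← key ⟨K, hK⟩ hKy]
    exact hKy

end Stable
section ChainBound

variable {k : Type} [Field k] {P : Type} [PartialOrder P] {M : PersMod k P}

/-- The intersection over a chain of decompositions of the chosen containers of `W`. -/
noncomputable def interSub (C : Set (Decomp M)) (x : P) (W : Submodule k (M.V x)) :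
    Submod M where
  S y := ⨅ (E : C), (pickP E.1 x W).S y
  map_mem := by
    intro a b h v hv
    rw [Submodule.mem_iInf] at hv ⊢
    exact fun E => (pickP E.1 x W).map_mem h (hv E)

theorem chain_bounded (hM : PFD M) {C : Set (Decomp M)} (hC : IsChain (· ≤ ·) C)
    (hne : C.Nonempty) : ∃ T : Decomp M, ∀ E ∈ C, E ≤ T := by
  classical
  choose Dst hDstC hDst using fun y => exists_stable hM hne (M := M) y
  -- existence of containers in every member of the chain
  have hex : ∀ (x : P) (N₀ : Submod M), N₀ ∈ (Dst x).parts → N₀.S x ≠ ⊥ →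
      ∀ E ∈ C, ∃ N ∈ E.parts, N₀.S x ≤ N.S x := by
    intro x N₀ h₀ h1 E hE
    rcases eq_or_ne E (Dst x) with rfl | hdne
    · exact ⟨N₀, h₀, le_rfl⟩
    rcases hC.total hE (hDstC x) with hle | hle
    · obtain ⟨N, hN, hle'⟩ := hle N₀ h₀
      exact ⟨N, hN, hle' x⟩
    · obtain ⟨K, hK, _, hKy⟩ := (hDst x E hE hle).1 N₀ h₀ h1
      exact ⟨K, hK, le_of_eq hKy.symm⟩
  -- monotonicity of picked containers along the chain
  have mono : ∀ (x : P) (W : Submodule k (M.V x)), W ≠ ⊥ →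
      (∀ E ∈ C, ∃ N ∈ E.parts, W ≤ N.S x) →
      ∀ E E' : Decomp M, E ∈ C → E' ∈ C → E ≤ E' → pickP E' x W ≤ pickP E x W := by
    intro x W hW hexW E E' _ hE' hEE'
    obtain ⟨hmem', hle'⟩ := pickP_spec (hexW E' hE')
    obtain ⟨N, hN, hle⟩ := hEE' _ hmem'
    rw [pickP_unique hW hN (hle'.trans (hle x))]
    exact hle
  -- the value of the intersection submodule at its defining point
  have IS : ∀ (x : P) (N₀ : Submod M) (h₀ : N₀ ∈ (Dst x).parts) (h1 : N₀.S x ≠ ⊥),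
      (interSub C x (N₀.S x)).S x = N₀.S x := by
    intro x N₀ h₀ h1
    apply le_antisymm
    · refine (iInf_le (fun E : C => (pickP E.1 x (N₀.S x)).S x) ⟨Dst x, hDstC x⟩).trans ?_
      rw [pickP_unique h1 h₀ le_rfl]
    · exact le_iInf fun E => (pickP_spec (hex x N₀ h₀ h1 E.1 E.2)).2
  -- transport: a nonzero value point of an intersection submodule realizes it as an
  -- intersection submodule based at that point
  have TR : ∀ (x : P) (N₀ : Submod M) (h₀ : N₀ ∈ (Dst x).parts) (h1 : N₀.S x ≠ ⊥) (y : P),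
      (interSub C x (N₀.S x)).S y ≠ ⊥ →
      ∃ N₁ ∈ (Dst y).parts, N₁.S y ≠ ⊥ ∧
        interSub C x (N₀.S x) = interSub C y (N₁.S y) := by
    intro x N₀ h₀ h1 y hZy
    set W := N₀.S x with hW
    have hexW := hex x N₀ h₀ h1
    set Z := interSub C x W with hZ
    have hZle : ∀ E : C, Z.S y ≤ (pickP E.1 x W).S y :=
      fun E => iInf_le (fun E : C => (pickP E.1 x W).S y) E
    set N₁ := pickP (Dst y) x W with hN₁
    obtain ⟨hN₁mem, hN₁le⟩ := pickP_spec (hexW (Dst y) (hDstC y))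
    have hN₁y : N₁.S y ≠ ⊥ := fun hb =>
      hZy (le_bot_iff.mp ((hZle ⟨Dst y, hDstC y⟩).trans (le_of_eq hb)))
    refine ⟨N₁, hN₁mem, hN₁y, ?_⟩
    have main : ∀ E ∈ C, pickP E x W = pickP E y (N₁.S y) := by
      intro E hE
      obtain ⟨hNEmem, hNEle⟩ := pickP_spec (hexW E hE)
      have hNEy : (pickP E x W).S y ≠ ⊥ := fun hb =>
        hZy (le_bot_iff.mp ((hZle ⟨E, hE⟩).trans (le_of_eq hb)))
      rcases eq_or_ne E (Dst y) with rfl | hdne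
      · exact (pickP_unique hN₁y hN₁mem le_rfl).symm
      rcases hC.total hE (hDstC y) with hle | hle
      · have hm := mono x W h1 hexW E (Dst y) hE (hDstC y) hle
        exact (pickP_unique hN₁y hNEmem (hm y)).symm
      · obtain ⟨K, hKmem, _, hKy⟩ := (hDst y E hE hle).1 N₁ hN₁mem hN₁y
        have hm := mono x W h1 hexW (Dst y) E (hDstC y) hE hle
        have hKE : K = pickP E x W :=
          E.uniq hNEy hKmem hNEmem (le_of_eq hKy.symm |>.trans' ((hm y).trans le_rfl)
            |>.trans (le_of_eq rfl)) le_rfl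
        refine (pickP_unique hN₁y hNEmem ?_).symm
        rw [← hKy, hKE]
    exact Submod.ext' fun z => iInf_congr fun E => by rw [main E.1 E.2]
  -- the upper bound
  refine ⟨⟨{Z | ∃ (x : P) (N₀ : Submod M), N₀ ∈ (Dst x).parts ∧ N₀.S x ≠ ⊥ ∧
      Z = interSub C x (N₀.S x)}, ?_, ?_, ?_⟩, ?_⟩
  · rintro Z ⟨x, N₀, h₀, h1, rfl⟩
    exact ⟨x, by rw [IS x N₀ h₀ h1]; exact h1⟩
  · intro y Z hZ
    by_cases hZy : Z.S y = ⊥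
    · rw [hZy]; exact disjoint_bot_left
    obtain ⟨x, N₀, h₀, h1, rfl⟩ := hZ
    obtain ⟨N₁, hN₁mem, hN₁y, heq⟩ := TR x N₀ h₀ h1 y hZy
    have hval : (interSub C x (N₀.S x)).S y = N₁.S y := by rw [heq, IS y N₁ hN₁mem hN₁y]
    rw [hval]
    refine ((Dst y).disj y N₁ hN₁mem).mono_right ?_
    refine iSup₂_le fun J hJ => ?_
    by_cases hJy : J.S y = ⊥
    · rw [hJy]; exact bot_le
    obtain ⟨x', N₀', h₀', h1', rfl⟩ := hJ.1
    obtain ⟨N₂, hN₂mem, hN₂y, heq₂⟩ := TR x' N₀' h₀' h1' y hJy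
    have hval₂ : (interSub C x' (N₀'.S x')).S y = N₂.S y := by
      rw [heq₂, IS y N₂ hN₂mem hN₂y]
    have hne₂ : N₂ ≠ N₁ := by
      intro hc
      apply hJ.2
      rw [heq₂, hc, ← heq]
      rfl
    rw [hval₂]
    exact le_iSup₂ (f := fun J (_ : J ∈ (Dst y).parts \ {N₁}) => J.S y) N₂ ⟨hN₂mem, hne₂⟩
  · intro y
    refine le_antisymm le_top ?_
    rw [← (Dst y).spans y]
    refine iSup₂_le fun N hN => ?_
    by_cases hNy : N.S y = ⊥
    · rw [hNy]; exact bot_le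
    refine (le_of_eq (IS y N hN hNy).symm).trans ?_
    exact le_iSup₂ (f := fun (Z : Submod M)
      (_ : Z ∈ {Z | ∃ (x : P) (N₀ : Submod M), N₀ ∈ (Dst x).parts ∧ N₀.S x ≠ ⊥ ∧
        Z = interSub C x (N₀.S x)}) => Z.S y) (interSub C y (N.S y)) ⟨y, N, hN, hNy, rfl⟩
  · rintro E hE K ⟨x, N₀, h₀, h1, rfl⟩
    exact ⟨pickP E x (N₀.S x), (pickP_spec (hex x N₀ h₀ h1 E hE)).1,
      fun z => iInf_le (fun E' : C => (pickP E'.1 x (N₀.S x)).S z) ⟨E, hE⟩⟩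

end ChainBound
section Restrict

variable {k : Type} [Field k] {P : Type} [PartialOrder P] {M : PersMod k P}

/-- The persistence module obtained by restricting `M` to a submodule. -/
def Submod.restrict (N : Submod M) : PersMod k P where
  V x := ↥(N.S x)
  acg _ := inferInstance
  mod _ := inferInstance
  map {x y} h := (M.map h).restrict (fun v hv => N.map_mem h hv)
  map_id := by
    intro x v
    apply Subtype.ext
    rw [LinearMap.restrict_coe_apply]
    exact M.map_id x v.1
  map_comp := by
    intro x y z h₁ h₂ v
    apply Subtype.ext
    simp only [LinearMap.restrict_coe_apply]
    exact M.map_comp h₁ h₂ v.1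

theorem Decomp.persIso (D : Decomp M) :
    PersIso M (dSum fun N : D.parts => N.1.restrict) := by
  classical
  set coeMap : ∀ x : P, (Π₀ N : D.parts, ↥(N.1.S x)) →ₗ[k] M.V x :=
    fun x => DFinsupp.lsum ℕ (fun N : D.parts => (N.1.S x).subtype) with hcoe
  have hbij : ∀ x, Function.Bijective (coeMap x) := by
    intro x
    constructor
    · exact (D.indep x).dfinsupp_lsum_injective
    · rw [← LinearMap.range_eq_top, ← Submodule.iSup_eq_range_dfinsupp_lsum]
      rw [iSup_subtype]
      exact D.spans x
  set E : ∀ x : P, M.V x ≃ₗ[k] (dSum fun N : D.parts => N.1.restrict).V x :=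
    fun x => (LinearEquiv.ofBijective (coeMap x) (hbij x)).symm with hE
  have hnat : ∀ (x y : P) (h : x ≤ y) (w : Π₀ N : D.parts, ↥(N.1.S x)),
      coeMap y ((dSum fun N : D.parts => N.1.restrict).map h w) = M.map h (coeMap x w) := by
    intro x y h w
    have : (coeMap y).comp
        (DFinsupp.mapRange.linearMap fun N : D.parts => (N.1.restrict).map h)
        = (M.map h).comp (coeMap x) := by
      refine DFinsupp.lhom_ext fun N v => ?_
      simp only [LinearMap.comp_apply, DFinsupp.mapRange.linearMap_apply,
        DFinsupp.mapRange_single, hcoe]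
      erw [LinearMap.comp_apply, DFinsupp.lsum_single, DFinsupp.mapRange.linearMap_apply, DFinsupp.mapRange_single, DFinsupp.lsum_single]
      simp only [Submodule.coe_subtype]
      exact LinearMap.restrict_coe_apply (M.map h) (fun v hv => N.1.map_mem h hv) v
    exact LinearMap.congr_fun this w
  refine ⟨E, ?_⟩
  intro x y h v
  have h1 : coeMap x (E x v) = v :=
    (LinearEquiv.ofBijective (coeMap x) (hbij x)).apply_symm_apply v
  have h2 := hnat x y h (E x v)
  rw [h1] at h2
  rw [← h2]
  exact ((LinearEquiv.ofBijective (coeMap y) (hbij y)).symm_apply_apply _)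

end Restrict
section Split

variable {k : Type} [Field k] {P : Type} [PartialOrder P] {M : PersMod k P}

theorem biSup_split_mem {α β : Type} [CompleteLattice α] {s : Set β} {b : β} (hb : b ∈ s)
    (f : β → α) : (⨆ J ∈ s, f J) = f b ⊔ ⨆ J ∈ s \ {b}, f J := by
  apply le_antisymm
  · refine iSup₂_le fun J hJ => ?_
    rcases eq_or_ne J b with rfl | hJb
    · exact le_sup_left
    · exact le_sup_right.trans' (le_iSup₂ (f := fun J (_ : J ∈ s \ {b}) => f J) J ⟨hJ, hJb⟩)
  · refine sup_le (le_iSup₂ (f := fun J (_ : J ∈ s) => f J) b hb)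
      (iSup₂_le fun J hJ => le_iSup₂ (f := fun J (_ : J ∈ s) => f J) J hJ.1)

theorem Decomp.indecomposable_of_max {D : Decomp M} (hmax : ∀ E : Decomp M, D ≤ E → E ≤ D)
    {N : Submod M} (hN : N ∈ D.parts) : Indecomposable N.restrict := by
  obtain ⟨x₀, hx₀⟩ := D.nonzero N hN
  constructor
  · intro hz
    refine hx₀ ((Submodule.eq_bot_iff _).mpr fun v hv => ?_)
    exact congrArg Subtype.val (hz x₀ ⟨v, hv⟩)
  rintro M' M'' ⟨e, hcomm⟩
  by_contra hor
  push_neg at hor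
  obtain ⟨hA, hB⟩ := hor
  obtain ⟨xA, vA, hvA⟩ : ∃ x, ∃ v : M'.V x, v ≠ 0 := by
    by_contra hc; push_neg at hc; exact hA hc
  obtain ⟨xB, vB, hvB⟩ : ∃ x, ∃ v : M''.V x, v ≠ 0 := by
    by_contra hc; push_neg at hc; exact hB hc
  -- the two halves of N induced by the product decomposition
  set N' : Submod M :=
    { S := fun x => Submodule.map (N.S x).subtype
        (LinearMap.ker ((LinearMap.snd k (M'.V x) (M''.V x)).comp (e x).toLinearMap))
      map_mem := by
        intro x y h v hv
        obtain ⟨w, hw, rfl⟩ := hv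
        simp only [SetLike.mem_coe, LinearMap.mem_ker, LinearMap.comp_apply] at hw
        refine ⟨N.restrict.map h w, ?_, ?_⟩
        · show (e y (N.restrict.map h w)).2 = 0
          rw [hcomm x y h w]
          show (M''.map h) (e x w).2 = 0
          rw [show ((e x) w).2 = 0 from hw, map_zero]
        · exact LinearMap.restrict_coe_apply (M.map h) (fun v hv => N.map_mem h hv) w } with hN'def
  set N'' : Submod M :=
    { S := fun x => Submodule.map (N.S x).subtype
        (LinearMap.ker ((LinearMap.fst k (M'.V x) (M''.V x)).comp (e x).toLinearMap))
      map_mem := by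
        intro x y h v hv
        obtain ⟨w, hw, rfl⟩ := hv
        simp only [SetLike.mem_coe, LinearMap.mem_ker, LinearMap.comp_apply] at hw
        refine ⟨N.restrict.map h w, ?_, ?_⟩
        · show (e y (N.restrict.map h w)).1 = 0
          rw [hcomm x y h w]
          show (M'.map h) (e x w).1 = 0
          rw [show ((e x) w).1 = 0 from hw, map_zero]
        · exact LinearMap.restrict_coe_apply (M.map h) (fun v hv => N.map_mem h hv) w } with hN''def
  have le' : N' ≤ N := fun x => Submodule.map_subtype_le _ _
  have le'' : N'' ≤ N := fun x => Submodule.map_subtype_le _ _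
  have sup_eq : ∀ x, N'.S x ⊔ N''.S x = N.S x := by
    intro x
    apply le_antisymm (sup_le (le' x) (le'' x))
    intro v hv
    set w : N.restrict.V x := ⟨v, hv⟩ with hw
    set a := (e x).symm ((e x w).1, 0) with ha
    set b := (e x).symm (0, (e x w).2) with hb
    have hab : a + b = w := by
      refine ((e x).symm.map_add _ _).symm.trans ?_
      show (e x).symm ((e x w).1 + 0, 0 + (e x w).2) = w
      rw [add_zero, zero_add]
      exact (e x).symm_apply_apply w
    have hmem1 : a.1 ∈ N'.S x := by
      refine ⟨a, ?_, rfl⟩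
      show ((e x) a).2 = 0
      exact congrArg Prod.snd ((e x).apply_symm_apply _)
    have hmem2 : b.1 ∈ N''.S x := by
      refine ⟨b, ?_, rfl⟩
      show ((e x) b).1 = 0
      exact congrArg Prod.fst ((e x).apply_symm_apply _)
    have : v = a.1 + b.1 := congrArg Subtype.val hab.symm
    rw [this]
    exact Submodule.add_mem_sup hmem1 hmem2
  have inf_eq : ∀ x, N'.S x ⊓ N''.S x = ⊥ := by
    intro x
    rw [eq_bot_iff]
    rintro v ⟨hv1, hv2⟩
    obtain ⟨w₁, hw₁, hw₁v⟩ := hv1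
    obtain ⟨w₂, hw₂, hw₂v⟩ := hv2
    simp only [SetLike.mem_coe, LinearMap.mem_ker, LinearMap.comp_apply] at hw₁ hw₂
    have hww : w₁ = w₂ := Subtype.ext (hw₁v.trans hw₂v.symm)
    have hez : (e x) w₁ = 0 := by
      have h2 : ((e x) w₁).2 = 0 := hw₁
      have h1 : ((e x) w₁).1 = 0 := by rw [hww]; exact hw₂
      exact Prod.ext h1 h2
    have : w₁ = 0 := (e x).map_eq_zero_iff.mp hez
    rw [Submodule.mem_bot, ← hw₁v, this]
    rfl
  have N'ne : ∃ x, N'.S x ≠ ⊥ := by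
    refine ⟨xA, ?_⟩
    rw [Submodule.ne_bot_iff]
    set w := (e xA).symm (vA, 0) with hwdef
    refine ⟨w.1, ⟨w, ?_, rfl⟩, ?_⟩
    · show ((e xA) w).2 = 0
      exact congrArg Prod.snd ((e xA).apply_symm_apply _)
    · intro hc
      have hz : (vA, (0 : M''.V xA)) = 0 := by
        exact (e xA).symm.map_eq_zero_iff.mp (Subtype.ext hc)
      exact hvA (congrArg Prod.fst hz)
  have N''ne : ∃ x, N''.S x ≠ ⊥ := by
    refine ⟨xB, ?_⟩
    rw [Submodule.ne_bot_iff]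
    set w := (e xB).symm (0, vB) with hwdef
    refine ⟨w.1, ⟨w, ?_, rfl⟩, ?_⟩
    · show ((e xB) w).1 = 0
      exact congrArg Prod.fst ((e xB).apply_symm_apply _)
    · intro hc
      have hz : ((0 : M'.V xB), vB) = 0 := by
        exact (e xB).symm.map_eq_zero_iff.mp (Subtype.ext hc)
      exact hvB (congrArg Prod.snd hz)
  -- basic distinctness facts
  obtain ⟨x', hx'⟩ := N'ne
  obtain ⟨x'', hx''⟩ := N''ne
  have hne12 : N' ≠ N'' := by
    intro hc
    refine hx' (le_bot_iff.mp ?_)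
    rw [← inf_eq x']
    exact le_inf le_rfl (le_of_eq (by rw [hc]))
  have hneN1 : N' ≠ N := by
    intro hc
    refine hx'' (le_bot_iff.mp ?_)
    rw [← inf_eq x'']
    exact le_inf (by rw [hc]; exact le'' x'') le_rfl
  have hneN2 : N'' ≠ N := by
    intro hc
    refine hx' (le_bot_iff.mp ?_)
    rw [← inf_eq x']
    exact le_inf le_rfl (by rw [hc]; exact le' x')
  have hnotin1 : N' ∉ D.parts \ {N} := by
    rintro ⟨hmem, -⟩
    exact hneN1 (D.uniq hx' hmem hN le_rfl (le' x'))
  have hnotin2 : N'' ∉ D.parts \ {N} := by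
    rintro ⟨hmem, -⟩
    exact hneN2 (D.uniq hx'' hmem hN le_rfl (le'' x''))
  -- the refined decomposition
  set parts' : Set (Submod M) := insert N' (insert N'' (D.parts \ {N})) with hparts'
  have hsup' : ∀ x, (⨆ J ∈ parts', J.S x)
      = N'.S x ⊔ (N''.S x ⊔ ⨆ J ∈ D.parts \ {N}, J.S x) := by
    intro x
    rw [hparts', iSup_insert, iSup_insert]
  have hDdisj : ∀ x, Disjoint (N.S x) (⨆ J ∈ D.parts \ {N}, J.S x) := fun x => D.disj x N hN
  have hnz : ∀ Z ∈ parts', ∃ x, Z.S x ≠ ⊥ := by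
    rintro Z (rfl | rfl | hZ)
    · exact ⟨x', hx'⟩
    · exact ⟨x'', hx''⟩
    · exact D.nonzero Z hZ.1
  have hdj : ∀ (x : P), ∀ Z ∈ parts', Disjoint (Z.S x) (⨆ J ∈ parts' \ {Z}, J.S x) := by
    intro x Z hZ
    rcases hZ with rfl | rfl | hZ
    · have hd : parts' \ {N'} = insert N'' (D.parts \ {N}) := by
        rw [hparts', Set.insert_diff_self_of_notMem]
        rintro (h12 | h)
        · exact hne12 h12
        · exact hnotin1 h
      rw [hd, iSup_insert]
      refine Disjoint.disjoint_sup_right_of_disjoint_sup_left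
        (disjoint_iff.mpr (inf_eq x)) ?_
      rw [sup_eq x]
      exact hDdisj x
    · have hd : parts' \ {N''} = insert N' (D.parts \ {N}) := by
        rw [hparts', Set.insert_diff_of_notMem _ (by simpa using hne12),
          Set.insert_diff_self_of_notMem hnotin2]
      rw [hd, iSup_insert]
      refine Disjoint.disjoint_sup_right_of_disjoint_sup_left
        (disjoint_iff.mpr (by rw [inf_comm]; exact inf_eq x)) ?_
      rw [sup_comm, sup_eq x]
      exact hDdisj x
    · have hne1Z : N' ≠ Z := fun hc => hnotin1 (hc ▸ hZ)
      have hne2Z : N'' ≠ Z := fun hc => hnotin2 (hc ▸ hZ)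
      have hd : parts' \ {Z} = insert N' (insert N'' ((D.parts \ {N}) \ {Z})) := by
        rw [hparts', Set.insert_diff_of_notMem _ (by simpa using hne1Z),
          Set.insert_diff_of_notMem _ (by simpa using hne2Z)]
      rw [hd, iSup_insert, iSup_insert, ← sup_assoc, sup_eq x]
      refine (D.disj x Z hZ.1).mono_right ?_
      refine sup_le ?_ ?_
      · exact le_iSup₂ (f := fun J (_ : J ∈ D.parts \ {Z}) => J.S x) N
          ⟨hN, fun hc => hZ.2 (by rw [← hc]; rfl)⟩
      · refine iSup₂_le fun J hJ => ?_
        exact le_iSup₂ (f := fun J (_ : J ∈ D.parts \ {Z}) => J.S x) J ⟨hJ.1.1, hJ.2⟩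
  have hsp : ∀ x, (⨆ J ∈ parts', J.S x) = ⊤ := by
    intro x
    rw [hsup' x, ← sup_assoc, sup_eq x, ← biSup_split_mem hN (fun J => J.S x), D.spans x]
  set D' : Decomp M := ⟨parts', hnz, hdj, hsp⟩ with hD'
  have hDD' : D ≤ D' := by
    intro Z hZ
    have hZ' : Z ∈ parts' := hZ
    rcases hZ' with rfl | rfl | hZ'
    · exact ⟨N, hN, le'⟩
    · exact ⟨N, hN, le''⟩
    · exact ⟨Z, hZ'.1, le_rfl⟩
  have hD'D : D' ≤ D := hmax D' hDD'
  have hpeq : D.parts = D'.parts := Decomp.parts_eq_of_le_of_le hDD' hD'D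
  have hmem' : N' ∈ D.parts := by
    rw [hpeq]
    exact Set.mem_insert _ _
  exact hnotin1 ⟨hmem', by simpa using hneN1⟩

end Split

/-- **Existence of decomposition into indecomposables.**
Every pointwise finite-dimensional persistence module over an arbitrary poset is isomorphic
to a direct sum of a family of indecomposable persistence modules. -/
theorem decomposition_into_indecomposables (k P : Type) [Field k] [PartialOrder P]
    (M : PersMod k P) (hM : PFD M) :
    ∃ (Λ : Type) (Mf : Λ → PersMod k P),
      (∀ l, Indecomposable (Mf l)) ∧ PersIso M (dSum Mf) := by
  classical
  by_cases hzero : IsZeroMod M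
  · refine ⟨Empty, fun e => e.elim, fun l => l.elim, ?_⟩
    refine ⟨fun x =>
      { toFun := fun _ => 0
        map_add' := by intros; rw [add_zero]
        map_smul' := by intros; rw [RingHom.id_apply, smul_zero]
        invFun := fun _ => 0
        left_inv := fun v => (hzero x v).symm
        right_inv := fun w => DFinsupp.ext fun l => l.elim }, ?_⟩
    intro x y h v
    refine DFinsupp.ext fun l => l.elim
  · have hnz : ∃ x, ∃ v : M.V x, v ≠ 0 := by
      by_contra hc; push_neg at hc; exact hzero hc
    obtain ⟨x₀, v₀, hv₀⟩ := hnz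
    have Dtriv : Decomp M := by
      refine ⟨{topSubmod M}, ?_, ?_, ?_⟩
      · rintro N rfl
        refine ⟨x₀, fun hb => hv₀ ?_⟩
        have : v₀ ∈ (topSubmod M).S x₀ := trivial
        rw [hb] at this
        simpa using this
      · intro x N hN
        rw [Set.mem_singleton_iff] at hN
        subst hN
        rw [Set.diff_self]
        simp
      · intro x
        rw [iSup_singleton]
        rfl
    haveI : Nonempty (Decomp M) := ⟨Dtriv⟩
    obtain ⟨Dmax, hmax⟩ := zorn_le (α := Decomp M) (fun c hc => by
      rcases c.eq_empty_or_nonempty with rfl | hne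
      · exact bddAbove_empty
      · obtain ⟨T, hT⟩ := chain_bounded hM hc hne
        exact ⟨T, fun E hE => hT E hE⟩)
    refine ⟨Dmax.parts, fun N => N.1.restrict, ?_, Dmax.persIso⟩
    intro l
    exact Dmax.indecomposable_of_max (fun E hE => hmax hE) l.2
end

section
/- There exists a bipersistence module with no good barcode: Let P = {0,1,2} × {0,1,2} with the product order, and let M be the P-module defined by M_{(0,0)} = 0, M_{(1,0)} = M_{(2,0)} = k, M_{(0,1)} = k, M_{(1,1)} = k², M_{(2,1)} = k, M_{(0,2)} = M_{(1,2)} = k, M_{(2,2)} = 0, with structure maps: M_{(1,0),(2,0)} = id, M_{(0,1),(1,1)}(x) = (x,0), M_{(1,1),(2,1)}(x,y) = x + y, M_{(0,2),(1,2)} = id, M_{(1,0),(1,1)}(x) = (0,x), M_{(2,0),(2,1)} = id, M_{(0,1),(0,2)} = id, M_{(1,1),(1,2)}(x,y) = x (and all maps to or from the zero spaces are zero). Then M has no good barcode: there is no multiset B of subsets of P such that for all x ≤ y in P, the rank of M_{x,y} equals the number of elements S of B (counted with multiplicity) with x ∈ S and y ∈ S. -/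
set_option autoImplicit false

open Classical

/-- A good barcode of a `P`-module `M`: a multiset `B` of subsets of `P` such that for all
`x ≤ y` the rank of `M_{x,y}` equals the number of members of `B` (with multiplicity)
containing both `x` and `y`. -/
noncomputable def IsGoodBarcode {k : Type} [Field k] {P : Type} [Preorder P]
    (M : PersMod k P) (B : Multiset (Set P)) : Prop :=
  ∀ (x y : P) (h : x ≤ y),
    Module.finrank k (LinearMap.range (M.map h)) =
      Multiset.card (B.filter fun S => x ∈ S ∧ y ∈ S)

/-- The rank invariant of the bipersistence module `M` of Example 4.4:
`M_{(0,0)} = 0`, `M_{(1,0)} = M_{(2,0)} = k`, `M_{(0,1)} = k`, `M_{(1,1)} = k²`,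
`M_{(2,1)} = k`, `M_{(0,2)} = M_{(1,2)} = k`, `M_{(2,2)} = 0`, with structure maps
`M_{(1,0),(2,0)} = id`, `M_{(0,1),(1,1)} x = (x,0)`, `M_{(1,1),(2,1)} (x,y) = x+y`,
`M_{(0,2),(1,2)} = id`, `M_{(1,0),(1,1)} x = (0,x)`, `M_{(2,0),(2,1)} = id`,
`M_{(0,1),(0,2)} = id`, `M_{(1,1),(1,2)} (x,y) = x`. -/
def rankM (x y : Fin 3 × Fin 3) : ℕ :=
  if x = ((0 : Fin 3), (0 : Fin 3)) ∨ y = ((2 : Fin 3), (2 : Fin 3)) ∨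
      (x = ((1 : Fin 3), (0 : Fin 3)) ∧ y = ((1 : Fin 3), (2 : Fin 3))) then 0
  else if x = ((1 : Fin 3), (1 : Fin 3)) ∧ y = ((1 : Fin 3), (1 : Fin 3)) then 2
  else 1


/-! ### Auxiliary constructions for the counterexample -/

/-- The dimension function of the module of Example 4.4. -/
def dM : Fin 3 × Fin 3 → ℕ := fun x =>
  if x = ((0:Fin 3),(0:Fin 3)) ∨ x = ((2:Fin 3),(2:Fin 3)) then 0
  else if x = ((1:Fin 3),(1:Fin 3)) then 2 else 1

/-- The matrix entries of the structure maps, as natural numbers. -/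
def eM : Fin 3 × Fin 3 → Fin 3 × Fin 3 → ℕ → ℕ → ℕ := fun x y i j =>
  if (x, y, i, j) ∈ ([
    (((1:Fin 3),(0:Fin 3)), ((1:Fin 3),(0:Fin 3)), 0, 0),
    (((2:Fin 3),(0:Fin 3)), ((2:Fin 3),(0:Fin 3)), 0, 0),
    (((0:Fin 3),(1:Fin 3)), ((0:Fin 3),(1:Fin 3)), 0, 0),
    (((1:Fin 3),(1:Fin 3)), ((1:Fin 3),(1:Fin 3)), 0, 0),
    (((1:Fin 3),(1:Fin 3)), ((1:Fin 3),(1:Fin 3)), 1, 1),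
    (((2:Fin 3),(1:Fin 3)), ((2:Fin 3),(1:Fin 3)), 0, 0),
    (((0:Fin 3),(2:Fin 3)), ((0:Fin 3),(2:Fin 3)), 0, 0),
    (((1:Fin 3),(2:Fin 3)), ((1:Fin 3),(2:Fin 3)), 0, 0),
    (((1:Fin 3),(0:Fin 3)), ((2:Fin 3),(0:Fin 3)), 0, 0),
    (((1:Fin 3),(0:Fin 3)), ((1:Fin 3),(1:Fin 3)), 1, 0),
    (((1:Fin 3),(0:Fin 3)), ((2:Fin 3),(1:Fin 3)), 0, 0),
    (((2:Fin 3),(0:Fin 3)), ((2:Fin 3),(1:Fin 3)), 0, 0),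
    (((0:Fin 3),(1:Fin 3)), ((1:Fin 3),(1:Fin 3)), 0, 0),
    (((0:Fin 3),(1:Fin 3)), ((2:Fin 3),(1:Fin 3)), 0, 0),
    (((0:Fin 3),(1:Fin 3)), ((0:Fin 3),(2:Fin 3)), 0, 0),
    (((0:Fin 3),(1:Fin 3)), ((1:Fin 3),(2:Fin 3)), 0, 0),
    (((1:Fin 3),(1:Fin 3)), ((2:Fin 3),(1:Fin 3)), 0, 0),
    (((1:Fin 3),(1:Fin 3)), ((2:Fin 3),(1:Fin 3)), 0, 1),
    (((1:Fin 3),(1:Fin 3)), ((1:Fin 3),(2:Fin 3)), 0, 0),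
    (((0:Fin 3),(2:Fin 3)), ((1:Fin 3),(2:Fin 3)), 0, 0)
  ] : List ((Fin 3 × Fin 3) × (Fin 3 × Fin 3) × ℕ × ℕ)) then 1 else 0

/-- The structure-map matrices over `ℕ`. -/
def NM (x y : Fin 3 × Fin 3) : Matrix (Fin (dM y)) (Fin (dM x)) ℕ :=
  Matrix.of fun i j => eM x y i.val j.val

lemma NM_id : ∀ x : Fin 3 × Fin 3, NM x x = 1 := by decide

lemma NM_comp : ∀ x y z : Fin 3 × Fin 3, x ≤ y → y ≤ z → NM y z * NM x y = NM x z := by decide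

/-- The structure-map matrices over `k`. -/
noncomputable def AM (k : Type) [Field k] (x y : Fin 3 × Fin 3) :
    Matrix (Fin (dM y)) (Fin (dM x)) k := (NM x y).map Nat.cast

section AuxRank

variable {k : Type} [Field k]

lemma AM_id (x : Fin 3 × Fin 3) : AM k x x = 1 := by
  rw [AM, NM_id]; exact Matrix.map_one _ Nat.cast_zero Nat.cast_one

lemma AM_comp {x y z : Fin 3 × Fin 3} (h1 : x ≤ y) (h2 : y ≤ z) :
    AM k y z * AM k x y = AM k x z := by
  rw [AM, AM, AM, ← NM_comp x y z h1 h2]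
  exact (Matrix.map_mul (f := Nat.castRingHom k)).symm

lemma AM_rank_zero {x y : Fin 3 × Fin 3} (h : NM x y = 0) : (AM k x y).rank = 0 := by
  rw [AM, h, Matrix.map_zero _ Nat.cast_zero, Matrix.rank_zero]

lemma AM_rank_one {x y : Fin 3 × Fin 3} (i j : ℕ) (hi : i < dM y) (hj : j < dM x)
    (he : eM x y i j = 1) (hd : dM x = 1 ∨ dM y = 1) : (AM k x y).rank = 1 := by
  have hle : (AM k x y).rank ≤ 1 := by
    rcases hd with hd | hd
    · have := (AM k x y).rank_le_width; omega
    · have := (AM k x y).rank_le_height; omega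
  have hentry : AM k x y ⟨i, hi⟩ ⟨j, hj⟩ = 1 := by
    simp [AM, NM, he]
  set w : Fin (dM y) → k := (AM k x y).mulVec (Pi.single ⟨j, hj⟩ 1) with hw
  have hwmem : w ∈ LinearMap.range (AM k x y).mulVecLin :=
    ⟨Pi.single ⟨j, hj⟩ 1, rfl⟩
  have hwne : w ≠ 0 := by
    intro h0
    have : w ⟨i, hi⟩ = 0 := by rw [h0]; rfl
    rw [hw, Matrix.mulVec_single] at this
    simp [hentry] at this
  have hpos : 0 < (AM k x y).rank := by
    rw [Matrix.rank, Module.finrank_pos_iff]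
    exact nontrivial_of_ne ⟨w, hwmem⟩ 0 (fun h => hwne (congrArg Subtype.val h))
  omega

/-- The bipersistence module of Example 4.4. -/
noncomputable def theM (k : Type) [Field k] : PersMod k (Fin 3 × Fin 3) where
  V x := Fin (dM x) → k
  acg := fun _ => inferInstance
  mod := fun _ => inferInstance
  map {x y} _ := (AM k x y).mulVecLin
  map_id := by
    intro x v
    show (AM k x x).mulVecLin v = v
    rw [AM_id, Matrix.mulVecLin_one]
    rfl
  map_comp := by
    intro x y z h1 h2 v
    show (AM k y z).mulVecLin ((AM k x y).mulVecLin v) = (AM k x z).mulVecLin v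
    rw [← AM_comp h1 h2, Matrix.mulVecLin_mul]
    rfl

end AuxRank

section AuxMultiset

variable {α : Type}

lemma aux_count_pair (B : Multiset α) (p q r : α → Prop) (a : α)
    {iq : DecidablePred q} {ir : DecidablePred r}
    (hq : @Multiset.filter _ q iq B = {a}) (himpq : ∀ x, r x → q x) (himpp : ∀ x, r x → p x)
    (hcard : Multiset.card (@Multiset.filter _ r ir B) = 1) : p a := by
  have : ∃ b, b ∈ B.filter r := Multiset.card_pos_iff_exists_mem.mp (by omega)
  obtain ⟨b, hb⟩ := this
  obtain ⟨hbB, hbr⟩ := Multiset.mem_filter.mp hb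
  have hbq : b ∈ B.filter q := Multiset.mem_filter.mpr ⟨hbB, himpq b hbr⟩
  rw [hq, Multiset.mem_singleton] at hbq
  exact hbq ▸ himpp b hbr

lemma aux_count_pair_zero (B : Multiset α) (p q r : α → Prop) (a : α)
    {iq : DecidablePred q} {ir : DecidablePred r}
    (hq : @Multiset.filter _ q iq B = {a}) (himp : ∀ x, p x → q x → r x)
    (hcard : Multiset.card (@Multiset.filter _ r ir B) = 0) : ¬ p a := by
  intro hp
  have ha : a ∈ B.filter q := hq ▸ Multiset.mem_singleton_self a
  obtain ⟨haB, haq⟩ := Multiset.mem_filter.mp ha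
  have : a ∈ B.filter r := Multiset.mem_filter.mpr ⟨haB, himp a hp haq⟩
  rw [Multiset.card_eq_zero] at hcard
  rw [hcard] at this
  exact absurd this (Multiset.notMem_zero a)

lemma aux_two_le_card {s : Multiset α} {a b : α} (ha : a ∈ s) (hb : b ∈ s)
    (hab : a ≠ b) : 2 ≤ Multiset.card s := by
  obtain ⟨t, rfl⟩ := Multiset.exists_cons_of_mem ha
  have hbt : b ∈ t := by
    rcases Multiset.mem_cons.mp hb with h | h
    · exact absurd h.symm hab
    · exact h
  obtain ⟨u, rfl⟩ := Multiset.exists_cons_of_mem hbt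
  rw [Multiset.card_cons, Multiset.card_cons]
  omega

lemma aux_mem_of_filter_singleton {p : α → Prop} [DecidablePred p] {B : Multiset α} {a : α}
    (h : B.filter p = {a}) : a ∈ B :=
  (Multiset.mem_filter.mp (h ▸ Multiset.mem_singleton_self a)).1

end AuxMultiset

/-- **A bipersistence module with no good barcode.**
There is a persistence module over the grid `{0,1,2} × {0,1,2}` (namely the module of
Example 4.4, which is pinned down here by its rank invariant `rankM`, recording the ranks of
all its structure maps and, on the diagonal, the dimensions of all its vector spaces)
which admits no good barcode. -/
theorem exists_module_with_no_good_barcode (k : Type) [Field k] :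
    ∃ M : PersMod k (Fin 3 × Fin 3),
      (∀ x, Module.Finite k (M.V x)) ∧
      (∀ (x y : Fin 3 × Fin 3) (h : x ≤ y),
        Module.finrank k (LinearMap.range (M.map h)) = rankM x y) ∧
      ¬ ∃ B : Multiset (Set (Fin 3 × Fin 3)), IsGoodBarcode M B := by
    classical
  have hrank : ∀ (x y : Fin 3 × Fin 3) (h : x ≤ y),
      Module.finrank k (LinearMap.range ((theM k).map h)) = rankM x y := by
    intro x y h
    show (AM k x y).rank = rankM x y
    fin_cases x <;> fin_cases y <;>
      first
        | exact absurd h (by decide)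
        | (rw [AM_id, Matrix.rank_one]; decide)
        | exact (AM_rank_zero (by decide)).trans (by decide)
        | exact (AM_rank_one 0 0 (by decide) (by decide) (by decide) (by decide)).trans (by decide)
        | exact (AM_rank_one 1 0 (by decide) (by decide) (by decide) (by decide)).trans (by decide)
  refine ⟨theM k, fun x => show Module.Finite k (Fin (dM x) → k) from inferInstance, hrank, ?_⟩
  rintro ⟨B, hB⟩
  have hc : ∀ x y : Fin 3 × Fin 3, x ≤ y →
      Multiset.card (B.filter fun S => x ∈ S ∧ y ∈ S) = rankM x y :=
    fun x y h => (hB x y h).symm.trans (hrank x y h)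
  -- the unique bar through (2,1)
  obtain ⟨S0, hS0⟩ := Multiset.card_eq_one.mp
    ((hc ((2:Fin 3),(1:Fin 3)) ((2:Fin 3),(1:Fin 3)) le_rfl).trans (by decide))
  -- the unique bar through (1,2)
  obtain ⟨S1, hS1⟩ := Multiset.card_eq_one.mp
    ((hc ((1:Fin 3),(2:Fin 3)) ((1:Fin 3),(2:Fin 3)) le_rfl).trans (by decide))
  have h01S0 : ((0:Fin 3),(1:Fin 3)) ∈ S0 :=
    aux_count_pair B (fun S => ((0:Fin 3),(1:Fin 3)) ∈ S) (fun S => ((2:Fin 3),(1:Fin 3)) ∈ S ∧ ((2:Fin 3),(1:Fin 3)) ∈ S) (fun S => ((0:Fin 3),(1:Fin 3)) ∈ S ∧ ((2:Fin 3),(1:Fin 3)) ∈ S) S0 hS0 (fun S hS => ⟨hS.2, hS.2⟩) (fun S hS => hS.1)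
      ((hc ((0:Fin 3),(1:Fin 3)) ((2:Fin 3),(1:Fin 3)) (by decide)).trans (by decide))
  have h10S0 : ((1:Fin 3),(0:Fin 3)) ∈ S0 :=
    aux_count_pair B (fun S => ((1:Fin 3),(0:Fin 3)) ∈ S) (fun S => ((2:Fin 3),(1:Fin 3)) ∈ S ∧ ((2:Fin 3),(1:Fin 3)) ∈ S) (fun S => ((1:Fin 3),(0:Fin 3)) ∈ S ∧ ((2:Fin 3),(1:Fin 3)) ∈ S) S0 hS0 (fun S hS => ⟨hS.2, hS.2⟩) (fun S hS => hS.1)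
      ((hc ((1:Fin 3),(0:Fin 3)) ((2:Fin 3),(1:Fin 3)) (by decide)).trans (by decide))
  have h11S0 : ((1:Fin 3),(1:Fin 3)) ∈ S0 :=
    aux_count_pair B (fun S => ((1:Fin 3),(1:Fin 3)) ∈ S) (fun S => ((2:Fin 3),(1:Fin 3)) ∈ S ∧ ((2:Fin 3),(1:Fin 3)) ∈ S) (fun S => ((1:Fin 3),(1:Fin 3)) ∈ S ∧ ((2:Fin 3),(1:Fin 3)) ∈ S) S0 hS0 (fun S hS => ⟨hS.2, hS.2⟩) (fun S hS => hS.1)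
      ((hc ((1:Fin 3),(1:Fin 3)) ((2:Fin 3),(1:Fin 3)) (by decide)).trans (by decide))
  have h01S1 : ((0:Fin 3),(1:Fin 3)) ∈ S1 :=
    aux_count_pair B (fun S => ((0:Fin 3),(1:Fin 3)) ∈ S) (fun S => ((1:Fin 3),(2:Fin 3)) ∈ S ∧ ((1:Fin 3),(2:Fin 3)) ∈ S) (fun S => ((0:Fin 3),(1:Fin 3)) ∈ S ∧ ((1:Fin 3),(2:Fin 3)) ∈ S) S1 hS1 (fun S hS => ⟨hS.2, hS.2⟩) (fun S hS => hS.1)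
      ((hc ((0:Fin 3),(1:Fin 3)) ((1:Fin 3),(2:Fin 3)) (by decide)).trans (by decide))
  have h11S1 : ((1:Fin 3),(1:Fin 3)) ∈ S1 :=
    aux_count_pair B (fun S => ((1:Fin 3),(1:Fin 3)) ∈ S) (fun S => ((1:Fin 3),(2:Fin 3)) ∈ S ∧ ((1:Fin 3),(2:Fin 3)) ∈ S) (fun S => ((1:Fin 3),(1:Fin 3)) ∈ S ∧ ((1:Fin 3),(2:Fin 3)) ∈ S) S1 hS1 (fun S hS => ⟨hS.2, hS.2⟩) (fun S hS => hS.1)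
      ((hc ((1:Fin 3),(1:Fin 3)) ((1:Fin 3),(2:Fin 3)) (by decide)).trans (by decide))
  have h10S1 : ((1:Fin 3),(0:Fin 3)) ∉ S1 :=
    aux_count_pair_zero B (fun S => ((1:Fin 3),(0:Fin 3)) ∈ S)
      (fun S => ((1:Fin 3),(2:Fin 3)) ∈ S ∧ ((1:Fin 3),(2:Fin 3)) ∈ S)
      (fun S => ((1:Fin 3),(0:Fin 3)) ∈ S ∧ ((1:Fin 3),(2:Fin 3)) ∈ S) S1 hS1
      (fun S hS hq => ⟨hS, hq.1⟩)
      ((hc ((1:Fin 3),(0:Fin 3)) ((1:Fin 3),(2:Fin 3)) (by decide)).trans (by decide))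
  have hne : S0 ≠ S1 := fun h => h10S1 (h ▸ h10S0)
  have hS0B : S0 ∈ B := aux_mem_of_filter_singleton hS0
  have hS1B : S1 ∈ B := aux_mem_of_filter_singleton hS1
  have hfinal : Multiset.card
      (B.filter fun S => ((0:Fin 3),(1:Fin 3)) ∈ S ∧ ((1:Fin 3),(1:Fin 3)) ∈ S) = 1 :=
    (hc ((0:Fin 3),(1:Fin 3)) ((1:Fin 3),(1:Fin 3)) (by decide)).trans (by decide)
  have h2 : 2 ≤ Multiset.card
      (B.filter fun S => ((0:Fin 3),(1:Fin 3)) ∈ S ∧ ((1:Fin 3),(1:Fin 3)) ∈ S) :=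
    aux_two_le_card (Multiset.mem_filter.mpr ⟨hS0B, h01S0, h11S0⟩)
      (Multiset.mem_filter.mpr ⟨hS1B, h01S1, h11S1⟩) hne
  omega
end

section
/- A one-parameter family of pairwise non-isomorphic indecomposable representations of the 4-star poset: Let k be a field, n ≥ 1, and λ ∈ k. Let Q be the poset with elements {1, 2, 3, 4, c}, where i < c for each i ∈ {1,2,3,4} and the elements 1, 2, 3, 4 are pairwise incomparable. Let J(λ) be the n × n Jordan block with λ on the diagonal, 1 on the superdiagonal, and 0 elsewhere. Define the Q-module M^λ by M^λ_i = kⁿ for i = 1, 2, 3, 4 and M^λ_c = kⁿ ⊕ kⁿ, with structure maps M^λ_{1,c}(x) = (x, 0), M^λ_{2,c}(x) = (0, x), M^λ_{3,c}(x) = (x, x), and M^λ_{4,c}(x) = (x, J(λ)x). Then M^λ is indecomposable, and for λ ≠ λ' in k, M^λ and M^{λ'} are not isomorphic. -/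
set_option autoImplicit false

open Classical

/-- The 4-star poset: four pairwise-incomparable elements `a1, a2, a3, a4`, each below a
common top element `c`. -/
inductive FourStar : Type
  | a1 | a2 | a3 | a4 | c
  deriving DecidableEq

instance : PartialOrder FourStar where
  le x y := x = y ∨ y = FourStar.c
  le_refl x := Or.inl rfl
  le_trans x y z hxy hyz := by
    rcases hyz with rfl | rfl
    · exact hxy
    · exact Or.inr rfl
  le_antisymm x y h₁ h₂ := by
    rcases h₁ with rfl | rfl
    · rfl
    · rcases h₂ with rfl | rfl <;> rfl

instance : ∀ x y : FourStar, Decidable (x ≤ y) := fun x y =>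
  decidable_of_iff (x = y ∨ y = FourStar.c) Iff.rfl

/-- The `n × n` Jordan block with eigenvalue `lam`. -/
def jordanMatrix (k : Type) [Field k] (n : ℕ) (lam : k) : Matrix (Fin n) (Fin n) k :=
  fun i j => if j = i then lam else if (j : ℕ) = (i : ℕ) + 1 then 1 else 0

namespace FSP
variable {k : Type} [Field k] {n : ℕ}

lemma mulJ_apply (lam : k) (A : Matrix (Fin n) (Fin n) k) (i j : Fin n) :
    (A * jordanMatrix k n lam) i j =
      lam * A i j + (if h : 0 < (j:ℕ) then A i ⟨(j:ℕ)-1, by omega⟩ else 0) := by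
  rw [Matrix.mul_apply]
  have step : ∀ l : Fin n, A i l * jordanMatrix k n lam l j
      = lam * (if l = j then A i j else 0) + (if (j:ℕ) = (l:ℕ)+1 then A i l else 0) := by
    intro l
    unfold jordanMatrix
    rcases eq_or_ne l j with rfl | hlj
    · have : ¬ ((l:ℕ) = (l:ℕ) + 1) := by omega
      simp [this]
      ring
    · have hjl : ¬ (j = l) := fun h => hlj h.symm
      by_cases h2 : (j:ℕ) = (l:ℕ)+1
      · simp [hjl, h2, hlj]
      · simp [hjl, h2, hlj]
  rw [Finset.sum_congr rfl (fun l _ => step l), Finset.sum_add_distrib]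
  congr 1
  · rw [← Finset.mul_sum]
    congr 1
    simp [Finset.sum_ite_eq']
  · by_cases hj : 0 < (j:ℕ)
    · rw [dif_pos hj]
      have hl0 : ((j:ℕ)-1) < n := by omega
      rw [Finset.sum_eq_single (⟨(j:ℕ)-1, hl0⟩ : Fin n)]
      · rw [if_pos (by simp only [Fin.val_mk]; omega)]
      · intro l _ hne
        rw [if_neg]
        intro hcond
        exact hne (Fin.ext (by simp; omega))
      · simp
    · rw [dif_neg hj]
      apply Finset.sum_eq_zero
      intro l _
      rw [if_neg (by omega)]

lemma Jmul_apply (lam : k) (A : Matrix (Fin n) (Fin n) k) (i j : Fin n) :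
    (jordanMatrix k n lam * A) i j =
      lam * A i j + (if h : (i:ℕ)+1 < n then A ⟨(i:ℕ)+1, h⟩ j else 0) := by
  rw [Matrix.mul_apply]
  have step : ∀ l : Fin n, jordanMatrix k n lam i l * A l j
      = lam * (if l = i then A i j else 0) + (if (l:ℕ) = (i:ℕ)+1 then A l j else 0) := by
    intro l
    unfold jordanMatrix
    rcases eq_or_ne l i with rfl | hli
    · have : ¬ ((l:ℕ) = (l:ℕ) + 1) := by omega
      simp [this, mul_comm]
    · by_cases h2 : (l:ℕ) = (i:ℕ)+1
      · simp [hli, h2]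
      · simp [hli, h2]
  rw [Finset.sum_congr rfl (fun l _ => step l), Finset.sum_add_distrib]
  congr 1
  · rw [← Finset.mul_sum]
    congr 1
    simp [Finset.sum_ite_eq']
  · by_cases hi : (i:ℕ)+1 < n
    · rw [dif_pos hi]
      rw [Finset.sum_eq_single (⟨(i:ℕ)+1, hi⟩ : Fin n)]
      · rw [if_pos (by simp)]
      · intro l _ hne
        rw [if_neg]
        intro hcond
        exact hne (Fin.ext (by simpa using hcond))
      · simp
    · rw [dif_neg hi]
      apply Finset.sum_eq_zero
      intro l _
      rw [if_neg (by omega)]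


variable {lam : k} {A : Matrix (Fin n) (Fin n) k}

lemma rel (hc : A * jordanMatrix k n lam = jordanMatrix k n lam * A) (i j : Fin n) :
    (if h : 0 < (j:ℕ) then A i ⟨(j:ℕ)-1, by omega⟩ else 0) =
    (if h : (i:ℕ)+1 < n then A ⟨(i:ℕ)+1, h⟩ j else 0) := by
  have := congrFun (congrFun hc i) j
  rw [mulJ_apply, Jmul_apply] at this
  exact add_left_cancel this

lemma shift (hc : A * jordanMatrix k n lam = jordanMatrix k n lam * A)
    (i j : Fin n) (hi : (i:ℕ)+1 < n) (hj : (j:ℕ)+1 < n) :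
    A i j = A ⟨(i:ℕ)+1, hi⟩ ⟨(j:ℕ)+1, hj⟩ := by
  have h := rel hc i ⟨(j:ℕ)+1, hj⟩
  rw [dif_pos (by simp), dif_pos hi] at h
  simpa using h

lemma lastrow (hc : A * jordanMatrix k n lam = jordanMatrix k n lam * A)
    (i j : Fin n) (hi : (i:ℕ) = n - 1) (hj : (j:ℕ)+1 < n) :
    A i j = 0 := by
  have h := rel hc i ⟨(j:ℕ)+1, hj⟩
  rw [dif_pos (by simp), dif_neg (by omega)] at h
  simpa using h

lemma low (hc : A * jordanMatrix k n lam = jordanMatrix k n lam * A) :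
    ∀ (t : ℕ) (i j : Fin n), n - 1 - (i:ℕ) = t → (j:ℕ) < (i:ℕ) → A i j = 0 := by
  intro t
  induction t with
  | zero =>
    intro i j ht hji
    exact lastrow hc i j (by omega) (by omega)
  | succ t ih =>
    intro i j ht hji
    have hi : (i:ℕ)+1 < n := by omega
    have hj : (j:ℕ)+1 < n := by omega
    rw [shift hc i j hi hj]
    exact ih _ _ (by simp only [Fin.val_mk]; omega) (by simp only [Fin.val_mk]; omega)

lemma diag (hc : A * jordanMatrix k n lam = jordanMatrix k n lam * A) (hn : 1 ≤ n) :
    ∀ (t : ℕ) (i : Fin n), n - 1 - (i:ℕ) = t →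
    A i i = A ⟨n-1, by omega⟩ ⟨n-1, by omega⟩ := by
  intro t
  induction t with
  | zero =>
    intro i ht
    congr 1 <;> exact Fin.ext (by simp; omega)
  | succ t ih =>
    intro i ht
    have hi : (i:ℕ)+1 < n := by omega
    rw [shift hc i i hi hi]
    exact ih _ (by simp only [Fin.val_mk]; omega)

theorem jordan_commutant_idem (hn : 1 ≤ n) (lam : k) (A : Matrix (Fin n) (Fin n) k)
    (hc : A * jordanMatrix k n lam = jordanMatrix k n lam * A) (hi : A * A = A) :
    A = 0 ∨ A = 1 := by
  have hdiag : ∀ i : Fin n, A i i = A ⟨n-1, by omega⟩ ⟨n-1, by omega⟩ :=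
    fun i => diag hc hn _ i rfl
  set c : k := A ⟨n-1, by omega⟩ ⟨n-1, by omega⟩ with hcdef
  have hlow : ∀ i j : Fin n, (j:ℕ) < (i:ℕ) → A i j = 0 :=
    fun i j h => low hc _ i j rfl h
  -- c * c = c
  have hcc : c * c = c := by
    have h := congrFun (congrFun hi ⟨n-1, by omega⟩) ⟨n-1, by omega⟩
    rw [Matrix.mul_apply] at h
    rw [Finset.sum_eq_single (⟨n-1, by omega⟩ : Fin n)] at h
    · exact h
    · intro l _ hne
      have hl : (l:ℕ) < n - 1 := by
        rcases Nat.lt_or_ge (l:ℕ) (n-1) with h' | h'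
        · exact h'
        · exact absurd (Fin.ext (by simp; omega) : l = ⟨n-1, by omega⟩) hne
      rw [hlow _ l (by simp; omega), zero_mul]
    · simp
  set B : Matrix (Fin n) (Fin n) k := A - c • 1 with hBdef
  have hBstrict : ∀ i j : Fin n, (j:ℕ) ≤ (i:ℕ) → B i j = 0 := by
    intro i j hji
    rcases eq_or_lt_of_le hji with heq | hlt
    · have hij : i = j := Fin.ext heq.symm
      subst hij
      simp [hBdef, hdiag i, Matrix.one_apply]
    · have hne : ¬ (i = j) := fun h => by subst h; omega
      simp [hBdef, hlow i j hlt, Matrix.one_apply, hne]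
  have hc01 : c = 0 ∨ c = 1 := by
    have h : c * (c - 1) = 0 := by linear_combination hcc
    rcases mul_eq_zero.mp h with h' | h'
    · exact Or.inl h'
    · exact Or.inr (sub_eq_zero.mp h')
  have hB2 : B * B = (1 - 2*c) • B := by
    rw [hBdef, sub_mul, mul_sub, mul_sub, hi, Matrix.mul_smul, Matrix.mul_one,
      Matrix.smul_mul, Matrix.one_mul, Matrix.smul_mul, Matrix.mul_smul, Matrix.mul_one,
      smul_smul]
    ext i j
    simp only [Matrix.sub_apply, Matrix.smul_apply, smul_eq_mul]
    linear_combination (-((1 : Matrix (Fin n) (Fin n) k) i j)) * hcc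
  -- nilpotency
  have hpow : ∀ (m : ℕ) (i j : Fin n), (j:ℕ) < (i:ℕ) + m → (B^m) i j = 0 := by
    intro m
    induction m with
    | zero =>
      intro i j hj
      have : ¬ (i = j) := fun h => by subst h; omega
      simp [Matrix.one_apply, this]
    | succ m ih =>
      intro i j hj
      rw [pow_succ, Matrix.mul_apply]
      apply Finset.sum_eq_zero
      intro l _
      rcases Nat.lt_or_ge (l:ℕ) ((i:ℕ)+m) with h' | h'
      · rw [ih i l h', zero_mul]
      · rw [hBstrict l j (by omega), mul_zero]
  have hBn : B^n = 0 := by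
    ext i j
    rw [hpow n i j (by omega)]
    simp
  have hpowB : ∀ m : ℕ, B^(m+1) = (1-2*c)^m • B := by
    intro m
    induction m with
    | zero => simp
    | succ m ih =>
      rw [pow_succ, ih, Matrix.smul_mul, hB2, smul_smul, ← pow_succ]
  have hBzero : B = 0 := by
    have h := hpowB (n-1)
    rw [show n - 1 + 1 = n by omega, hBn] at h
    have hne : (1 - 2*c) ≠ 0 := by
      rcases hc01 with h' | h' <;> rw [h'] <;> norm_num
    have := (smul_eq_zero.mp h.symm).resolve_left (pow_ne_zero _ hne)
    exact this
  have hA : A = c • 1 := by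
    have := hBzero
    rw [hBdef, sub_eq_zero] at this
    exact this
  rcases hc01 with h' | h'
  · left
    rw [hA, h', zero_smul]
  · right
    rw [hA, h', one_smul]

theorem jordan_not_conj (hn : 1 ≤ n) (lam lam' : k) (hne : lam ≠ lam')
    (A : Matrix (Fin n) (Fin n) k) (hA : IsUnit A.det)
    (hc : A * jordanMatrix k n lam = jordanMatrix k n lam' * A) : False := by
  set C : Matrix (Fin n) (Fin n) k := jordanMatrix k n lam - lam • 1 with hC
  set C' : Matrix (Fin n) (Fin n) k := jordanMatrix k n lam' - lam • 1 with hC'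
  have hAC : A * C = C' * A := by
    rw [hC, hC', mul_sub, sub_mul, hc, Matrix.mul_smul, Matrix.mul_one,
      Matrix.smul_mul, Matrix.one_mul]
  have htri : ∀ (mu : k), (jordanMatrix k n mu - lam • 1).BlockTriangular id := by
    intro mu i j hij
    have hji : (j:ℕ) < (i:ℕ) := hij
    have h1 : ¬ (j = i) := fun h => by subst h; omega
    have h2 : ¬ ((j:ℕ) = (i:ℕ) + 1) := by omega
    have h3 : ¬ (i = j) := fun h => h1 h.symm
    simp [jordanMatrix, Matrix.sub_apply, Matrix.smul_apply, Matrix.one_apply, h1, h2, h3]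
  have hdetC : C.det = 0 := by
    rw [hC, Matrix.det_of_upperTriangular (htri lam)]
    apply Finset.prod_eq_zero (Finset.mem_univ (⟨0, by omega⟩ : Fin n))
    simp [jordanMatrix, Matrix.one_apply]
  have hdetC' : C'.det = (lam' - lam)^n := by
    rw [hC', Matrix.det_of_upperTriangular (htri lam')]
    have : ∀ i : Fin n, (jordanMatrix k n lam' - lam • 1) i i = lam' - lam := by
      intro i
      simp [jordanMatrix, Matrix.one_apply]
    rw [Finset.prod_congr rfl (fun i _ => this i)]
    simp
  have := congrArg Matrix.det hAC
  rw [Matrix.det_mul, Matrix.det_mul, hdetC, hdetC', mul_zero] at this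
  have h0 : (lam' - lam)^n ≠ 0 := pow_ne_zero _ (sub_ne_zero.mpr (Ne.symm hne))
  rcases hA with ⟨u, hu⟩
  have : (lam' - lam)^n * A.det = 0 := this.symm
  rcases mul_eq_zero.mp this with h | h
  · exact h0 h
  · rw [h] at hu
    exact u.isUnit.ne_zero hu

end FSP

/-- The representation `M^λ` of the 4-star poset: `kⁿ` at each leaf, `kⁿ ⊕ kⁿ` at the
center, with maps `x ↦ (x,0)`, `x ↦ (0,x)`, `x ↦ (x,x)` and `x ↦ (x, J(λ)x)`. -/
noncomputable def Mlam (k : Type) [Field k] (n : ℕ) (lam : k) : PersMod k FourStar where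
  V x := match x with
    | .c => (Fin n → k) × (Fin n → k)
    | _ => Fin n → k
  acg := fun x => by
    cases x
    case c => exact (inferInstance : AddCommGroup ((Fin n → k) × (Fin n → k)))
    all_goals exact (inferInstance : AddCommGroup (Fin n → k))
  mod := fun x => by
    cases x
    case c => exact (inferInstance : Module k ((Fin n → k) × (Fin n → k)))
    all_goals exact (inferInstance : Module k (Fin n → k))
  map {x y} _ :=
    match x, y with
    | .a1, .a1 => LinearMap.id
    | .a2, .a2 => LinearMap.id
    | .a3, .a3 => LinearMap.id
    | .a4, .a4 => LinearMap.id
    | .c, .c => LinearMap.id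
    | .a1, .c => LinearMap.prod LinearMap.id 0
    | .a2, .c => LinearMap.prod 0 LinearMap.id
    | .a3, .c => LinearMap.prod LinearMap.id LinearMap.id
    | .a4, .c => LinearMap.prod LinearMap.id (Matrix.toLin' (jordanMatrix k n lam))
    | _, _ => 0
  map_id := by
    intro x v
    cases x <;> rfl
  map_comp := by
    intro x y z h₁ h₂ v
    cases x <;> cases y <;> cases z <;>
      first
        | rfl
        | exact absurd h₁ (by decide)
        | exact absurd h₂ (by decide)

namespace FSP

lemma star_endo {k : Type} [Field k] {n : ℕ}
    (J J' : (Fin n → k) → (Fin n → k))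
    (F : (Fin n → k) × (Fin n → k) → (Fin n → k) × (Fin n → k))
    (g1 g2 g3 g4 : (Fin n → k) → (Fin n → k))
    (hF : ∀ a b, F (a + b) = F a + F b)
    (c1 : ∀ v, F (v, 0) = (g1 v, 0)) (c2 : ∀ v, F (0, v) = (0, g2 v))
    (c3 : ∀ v, F (v, v) = (g3 v, g3 v)) (c4 : ∀ v, F (v, J v) = (g4 v, J' (g4 v))) :
    (∀ v, g2 v = g1 v) ∧ (∀ v, g3 v = g1 v) ∧ (∀ v, g4 v = g1 v) ∧
      (∀ v, g1 (J v) = J' (g1 v)) ∧ (∀ a b, F (a, b) = (g1 a, g1 b)) := by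
  have hform : ∀ a b, F (a, b) = (g1 a, g2 b) := by
    intro a b
    have hab : ((a, b) : (Fin n → k) × (Fin n → k)) = (a, 0) + (0, b) := by
      rw [Prod.mk_add_mk, add_zero, zero_add]
    rw [hab, hF, c1, c2, Prod.mk_add_mk, add_zero, zero_add]
  have h31 : ∀ v, g3 v = g1 v := fun v =>
    congrArg Prod.fst ((c3 v).symm.trans (hform v v))
  have h21 : ∀ v, g2 v = g1 v := fun v =>
    (congrArg Prod.snd ((c3 v).symm.trans (hform v v))).symm.trans (h31 v)
  have h41 : ∀ v, g4 v = g1 v := fun v =>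
    congrArg Prod.fst ((c4 v).symm.trans (hform v (J v)))
  have hJ : ∀ v, g1 (J v) = J' (g1 v) := fun v =>
    (((h21 (J v)).symm.trans
      (congrArg Prod.snd ((c4 v).symm.trans (hform v (J v)))).symm).trans
      (congrArg J' (h41 v)))
  exact ⟨h21, h31, h41, hJ, fun a b => (hform a b).trans (by rw [h21 b])⟩

lemma comm_matrix {k : Type} [Field k] {n : ℕ}
    (g : (Fin n → k) →ₗ[k] (Fin n → k)) (Jm Jm' : Matrix (Fin n) (Fin n) k)
    (h : ∀ v, g (Matrix.toLin' Jm v) = Matrix.toLin' Jm' (g v)) :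
    LinearMap.toMatrix' g * Jm = Jm' * LinearMap.toMatrix' g := by
  have hl : g ∘ₗ Matrix.toLin' Jm = Matrix.toLin' Jm' ∘ₗ g := LinearMap.ext h
  calc LinearMap.toMatrix' g * Jm
      = LinearMap.toMatrix' (g ∘ₗ Matrix.toLin' Jm) := by
        rw [LinearMap.toMatrix'_comp, LinearMap.toMatrix'_toLin']
    _ = LinearMap.toMatrix' (Matrix.toLin' Jm' ∘ₗ g) := by rw [hl]
    _ = Jm' * LinearMap.toMatrix' g := by
        rw [LinearMap.toMatrix'_comp, LinearMap.toMatrix'_toLin']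

end FSP

/-- **A one-parameter family of pairwise non-isomorphic indecomposable representations of
the 4-star poset.**  For every `λ` in the field `k`, the module `M^λ` is indecomposable,
and `M^λ ≇ M^{λ'}` whenever `λ ≠ λ'`. -/
theorem fourStar_indecomposable_family (k : Type) [Field k] (n : ℕ) (hn : 1 ≤ n) :
    (∀ lam : k, Indecomposable (Mlam k n lam)) ∧
    (∀ lam lam' : k, lam ≠ lam' → ¬ PersIso (Mlam k n lam) (Mlam k n lam')) := by
  constructor
  · intro lam
    constructor
    · intro h
      have h1 := h FourStar.a1 (fun _ => (1:k))
      exact one_ne_zero (congrFun h1 (⟨0, hn⟩ : Fin n))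
    · rintro M' M'' ⟨e, he⟩
      let π : ∀ x : FourStar, (M'.V x × M''.V x) →ₗ[k] (M'.V x × M''.V x) :=
        fun x => (LinearMap.fst k (M'.V x) (M''.V x)).prod 0
      let q : ∀ x : FourStar, (Mlam k n lam).V x →ₗ[k] (Mlam k n lam).V x :=
        fun x => (e x).symm.toLinearMap ∘ₗ (π x) ∘ₗ (e x).toLinearMap
      have hqdef : ∀ x w, q x w = (e x).symm (π x (e x w)) := fun x w => rfl
      have hqe : ∀ x w, e x (q x w) = π x (e x w) := fun x w =>
        (e x).apply_symm_apply _
      have hπmap : ∀ (x y : FourStar) (h : x ≤ y) (w : M'.V x × M''.V x),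
          π y ((prodMod M' M'').map h w) = (prodMod M' M'').map h (π x w) := by
        intro x y h w
        show (M'.map h w.1, (0 : M''.V y)) = (M'.map h w.1, M''.map h 0)
        rw [map_zero]
      have hq : ∀ (x y : FourStar) (h : x ≤ y) (v : (Mlam k n lam).V x),
          q y ((Mlam k n lam).map h v) = (Mlam k n lam).map h (q x v) := by
        intro x y h v
        apply (e y).injective
        erw [hqe, he x y h v, hπmap, he x y h (q x v), hqe]
      have hidem : ∀ (x : FourStar) (v : (Mlam k n lam).V x), q x (q x v) = q x v := by
        intro x v
        apply (e x).injective
        rw [hqe, hqe]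
        rfl
      have c1 : ∀ v : Fin n → k, q FourStar.c (v, 0) = (q FourStar.a1 v, 0) :=
        fun v => hq FourStar.a1 FourStar.c (Or.inr rfl) v
      have c2 : ∀ v : Fin n → k, q FourStar.c (0, v) = (0, q FourStar.a2 v) :=
        fun v => hq FourStar.a2 FourStar.c (Or.inr rfl) v
      have c3 : ∀ v : Fin n → k, q FourStar.c (v, v) = (q FourStar.a3 v, q FourStar.a3 v) :=
        fun v => hq FourStar.a3 FourStar.c (Or.inr rfl) v
      have c4 : ∀ v : Fin n → k, q FourStar.c (v, Matrix.toLin' (jordanMatrix k n lam) v)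
          = (q FourStar.a4 v, Matrix.toLin' (jordanMatrix k n lam) (q FourStar.a4 v)) :=
        fun v => hq FourStar.a4 FourStar.c (Or.inr rfl) v
      obtain ⟨h21, h31, h41, hcomm, hform⟩ :=
        FSP.star_endo (fun v => Matrix.toLin' (jordanMatrix k n lam) v)
          (fun v => Matrix.toLin' (jordanMatrix k n lam) v)
          (fun w => q FourStar.c w)
          (fun v => q FourStar.a1 v) (fun v => q FourStar.a2 v)
          (fun v => q FourStar.a3 v) (fun v => q FourStar.a4 v)
          (fun a b => map_add (q FourStar.c) a b) c1 c2 c3 c4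
      let g : (Fin n → k) →ₗ[k] (Fin n → k) :=
        { toFun := fun v => q FourStar.a1 v,
          map_add' := fun a b => map_add (q FourStar.a1) a b,
          map_smul' := fun c a => map_smul (q FourStar.a1) c a }
      have hA : LinearMap.toMatrix' g * jordanMatrix k n lam
          = jordanMatrix k n lam * LinearMap.toMatrix' g :=
        FSP.comm_matrix g _ _ (fun v => hcomm v)
      have hAA : LinearMap.toMatrix' g * LinearMap.toMatrix' g = LinearMap.toMatrix' g := by
        rw [← LinearMap.toMatrix'_comp]
        congr 1
        exact LinearMap.ext (fun v => hidem FourStar.a1 v)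
      rcases FSP.jordan_commutant_idem hn lam _ hA hAA with h0 | h0
      · left
        have hg0 : ∀ v : Fin n → k, q FourStar.a1 v = 0 := by
          intro v
          have hgv : g v = Matrix.toLin' (0 : Matrix (Fin n) (Fin n) k) v := by
            rw [← h0, Matrix.toLin'_toMatrix']
          have := hgv; simp at this; exact this
        have hq0 : ∀ (x : FourStar) (v : (Mlam k n lam).V x), q x v = 0 := by
          intro x
          cases x with
          | a1 => exact hg0
          | a2 => exact fun v => (h21 v).trans (hg0 v)
          | a3 => exact fun v => (h31 v).trans (hg0 v)
          | a4 => exact fun v => (h41 v).trans (hg0 v)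
          | c =>
            intro v
            exact (hform v.1 v.2).trans (by rw [hg0, hg0]; rfl)
        intro x w'
        have hv : q x ((e x).symm (w', 0)) = (e x).symm (w', 0) := by
          erw [hqdef, (e x).apply_symm_apply]
          exact rfl
        rw [hq0 x] at hv
        have hz : ((w', (0 : M''.V x)) : M'.V x × M''.V x) = 0 := by
          have h2 := congrArg (e x) hv
          erw [map_zero, (e x).apply_symm_apply] at h2
          exact h2.symm
        exact congrArg Prod.fst hz
      · right
        have hgid : ∀ v : Fin n → k, q FourStar.a1 v = v := by
          intro v
          have hgv : g v = Matrix.toLin' (1 : Matrix (Fin n) (Fin n) k) v := by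
            rw [← h0, Matrix.toLin'_toMatrix']
          have := hgv; simp at this; exact this
        have hqid : ∀ (x : FourStar) (v : (Mlam k n lam).V x), q x v = v := by
          intro x
          cases x with
          | a1 => exact hgid
          | a2 => exact fun v => (h21 v).trans (hgid v)
          | a3 => exact fun v => (h31 v).trans (hgid v)
          | a4 => exact fun v => (h41 v).trans (hgid v)
          | c =>
            intro v
            exact (hform v.1 v.2).trans (by rw [hgid, hgid]; exact rfl)
        intro x w''
        have hv : q x ((e x).symm (0, w'')) = 0 := by
          erw [hqdef, (e x).apply_symm_apply]
          show (e x).symm 0 = 0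
          exact map_zero _
        rw [hqid x] at hv
        have hz : (((0 : M'.V x), w'') : M'.V x × M''.V x) = 0 := by
          have h2 := congrArg (e x) hv
          erw [map_zero, (e x).apply_symm_apply] at h2
          exact h2
        exact congrArg Prod.snd hz
  · rintro lam lam' hne ⟨e, he⟩
    have c1 : ∀ v : Fin n → k, e FourStar.c (v, 0) = (e FourStar.a1 v, 0) :=
      fun v => he FourStar.a1 FourStar.c (Or.inr rfl) v
    have c2 : ∀ v : Fin n → k, e FourStar.c (0, v) = (0, e FourStar.a2 v) :=
      fun v => he FourStar.a2 FourStar.c (Or.inr rfl) v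
    have c3 : ∀ v : Fin n → k, e FourStar.c (v, v) = (e FourStar.a3 v, e FourStar.a3 v) :=
      fun v => he FourStar.a3 FourStar.c (Or.inr rfl) v
    have c4 : ∀ v : Fin n → k, e FourStar.c (v, Matrix.toLin' (jordanMatrix k n lam) v)
        = (e FourStar.a4 v, Matrix.toLin' (jordanMatrix k n lam') (e FourStar.a4 v)) :=
      fun v => he FourStar.a4 FourStar.c (Or.inr rfl) v
    obtain ⟨h21, h31, h41, hcomm, hform⟩ :=
      FSP.star_endo (fun v => Matrix.toLin' (jordanMatrix k n lam) v)
        (fun v => Matrix.toLin' (jordanMatrix k n lam') v)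
        (fun w => e FourStar.c w)
        (fun v => e FourStar.a1 v) (fun v => e FourStar.a2 v)
        (fun v => e FourStar.a3 v) (fun v => e FourStar.a4 v)
        (fun a b => map_add (e FourStar.c) a b) c1 c2 c3 c4
    let g : (Fin n → k) →ₗ[k] (Fin n → k) :=
      { toFun := fun v => e FourStar.a1 v,
        map_add' := fun a b => map_add (e FourStar.a1) a b,
        map_smul' := fun c a => map_smul (e FourStar.a1) c a }
    let g' : (Fin n → k) →ₗ[k] (Fin n → k) :=
      { toFun := fun v => (e FourStar.a1).symm v,
        map_add' := fun a b => map_add (e FourStar.a1).symm a b,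
        map_smul' := fun c a => map_smul (e FourStar.a1).symm c a }
    have hgg' : g ∘ₗ g' = LinearMap.id :=
      LinearMap.ext fun v => (e FourStar.a1).apply_symm_apply v
    have hdet : IsUnit (LinearMap.toMatrix' g).det := by
      apply IsUnit.of_mul_eq_one (LinearMap.toMatrix' g').det
      rw [← Matrix.det_mul, ← LinearMap.toMatrix'_comp, hgg',
        LinearMap.toMatrix'_id, Matrix.det_one]
    exact FSP.jordan_not_conj hn lam lam' hne _ hdet
      (FSP.comm_matrix g _ _ (fun v => hcomm v))
end
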